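/- If the differential Riccati equations ρP = Ṗ + AᵀP + PA + Q − PBR⁻¹BᵀP, P(T)=0, and ρΠ = Π̇ + (A+G)ᵀΠ + Π(A+G) + (I−Γ)ᵀQ(I−Γ) − ΠBR⁻¹BᵀΠ, Π(T)=0, admit symmetric solutions on [0,T], then the deterministic social cost functional ∑_{i=1}^N ∫₀^T e^{−ρt}(‖y_i(t) − Γy⁽ᴺ⁾(t)‖²_Q + ‖u_i(t)‖²_R) dt, where y_i solves ẏ_i = Ay_i + Gy⁽ᴺ⁾ + Bu_i with y_i(0)=0, is nonnegative for all controls (u₁,…,u_N), i.e., the problem is convex. -/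

import Mathlib

attribute [local instance] Matrix.normedAddCommGroup Matrix.normedSpace
open Matrix MeasureTheory intervalIntegral BigOperators

lemma dot_trans {n r : ℕ} (M : Matrix (Fin n) (Fin r) ℝ) (b : Fin r → ℝ) (z : Fin n → ℝ) :
    (M *ᵥ b) ⬝ᵥ z = b ⬝ᵥ Mᵀ *ᵥ z := by
  rw [dotProduct_mulVec, ← Matrix.mulVec_transpose, transpose_transpose]

lemma dot_symm {n : ℕ} {S : Matrix (Fin n) (Fin n) ℝ} (hS : S.IsSymm) (a b : Fin n → ℝ) :
    a ⬝ᵥ S *ᵥ b = b ⬝ᵥ S *ᵥ a := by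
  rw [dotProduct_mulVec, ← Matrix.mulVec_transpose, hS.eq, dotProduct_comm]

lemma continuous_of_hasDerivAt {E : Type*} [NormedAddCommGroup E] [NormedSpace ℝ E]
    {f : ℝ → E} {f' : ℝ → E} (h : ∀ t, HasDerivAt f (f' t) t) : Continuous f :=
  continuous_iff_continuousAt.2 fun t => (h t).continuousAt

lemma continuous_mulVec {n m : ℕ} {M : ℝ → Matrix (Fin n) (Fin m) ℝ} {z : ℝ → Fin m → ℝ}
    (hM : Continuous M) (hz : Continuous z) : Continuous fun t => M t *ᵥ z t := by
  refine continuous_pi fun j => ?_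
  simp only [mulVec, dotProduct]
  exact continuous_finset_sum _ fun k _ =>
    ((continuous_apply k).comp ((continuous_apply j).comp hM)).mul ((continuous_apply k).comp hz)

lemma continuous_dot {m : ℕ} {a b : ℝ → Fin m → ℝ} (ha : Continuous a) (hb : Continuous b) :
    Continuous fun t => a t ⬝ᵥ b t := by
  simp only [dotProduct]
  exact continuous_finset_sum _ fun k _ =>
    ((continuous_apply k).comp ha).mul ((continuous_apply k).comp hb)
open Matrix

lemma hasDerivAt_comp_pi {n : ℕ} {x : ℝ → Fin n → ℝ} {x' : Fin n → ℝ} {t : ℝ}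
    (hx : HasDerivAt x x' t) (j : Fin n) :
    HasDerivAt (fun s => x s j) (x' j) t :=
  ((ContinuousLinearMap.proj (R := ℝ) (φ := fun _ : Fin n => ℝ) j).hasFDerivAt).comp_hasDerivAt t hx

lemma hasDerivAt_entry {n m : ℕ} {M : ℝ → Matrix (Fin n) (Fin m) ℝ} {M' : Matrix (Fin n) (Fin m) ℝ} {t : ℝ}
    (hM : HasDerivAt M M' t) (j : Fin n) (k : Fin m) :
    HasDerivAt (fun s => M s j k) (M' j k) t := by
  have h1 : HasDerivAt (fun s => M s j) (M' j) t :=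
    ((ContinuousLinearMap.proj (R := ℝ) (φ := fun _ : Fin n => Fin m → ℝ) j).hasFDerivAt).comp_hasDerivAt t hM
  exact ((ContinuousLinearMap.proj (R := ℝ) (φ := fun _ : Fin m => ℝ) k).hasFDerivAt).comp_hasDerivAt t h1

lemma hasDerivAt_quad {n : ℕ} {x : ℝ → Fin n → ℝ} {x' : Fin n → ℝ}
    {M : ℝ → Matrix (Fin n) (Fin n) ℝ} {M' : Matrix (Fin n) (Fin n) ℝ} {t : ℝ}
    (hx : HasDerivAt x x' t) (hM : HasDerivAt M M' t) :
    HasDerivAt (fun s => x s ⬝ᵥ (M s) *ᵥ x s)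
      (x' ⬝ᵥ (M t) *ᵥ x t + x t ⬝ᵥ M' *ᵥ x t + x t ⬝ᵥ (M t) *ᵥ x') t := by
  have h : HasDerivAt (fun s => ∑ j, ∑ k, x s j * (M s j k * x s k))
      (∑ j, ∑ k, (x' j * (M t j k * x t k) +
        x t j * (M' j k * x t k + M t j k * x' k))) t :=
    HasDerivAt.fun_sum fun j _ => HasDerivAt.fun_sum fun k _ =>
      (hasDerivAt_comp_pi hx j).mul ((hasDerivAt_entry hM j k).mul (hasDerivAt_comp_pi hx k))
  convert h using 1
  · funext s
    simp [dotProduct, mulVec, Finset.mul_sum]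
  · simp only [dotProduct, mulVec, Finset.mul_sum, ← Finset.sum_add_distrib]
    refine Finset.sum_congr rfl fun j _ => Finset.sum_congr rfl fun k _ => by ring

lemma key_nonneg (n r : ℕ) (ρ T : ℝ) (hT : 0 ≤ T)
    (A0 Q0 : Matrix (Fin n) (Fin n) ℝ)
    (B : Matrix (Fin n) (Fin r) ℝ) (R : Matrix (Fin r) (Fin r) ℝ)
    (hR : R.PosDef) (hRs : R.IsSymm)
    (P P' : ℝ → Matrix (Fin n) (Fin n) ℝ)
    (hP : ∀ t, HasDerivAt P (P' t) t) (hPs : ∀ t, (P t).IsSymm)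
    (hric : ∀ t, ρ • P t = P' t + A0ᵀ * P t + P t * A0 + Q0 - P t * B * R⁻¹ * Bᵀ * P t)
    (hPT : P T = 0)
    (x : ℝ → Fin n → ℝ) (v : ℝ → Fin r → ℝ) (hv : Continuous v)
    (hx : ∀ t, HasDerivAt x (A0 *ᵥ x t + B *ᵥ v t) t)
    (hx0 : x 0 = 0) :
    0 ≤ ∫ t in (0:ℝ)..T, Real.exp (-ρ*t) * (x t ⬝ᵥ Q0 *ᵥ x t + v t ⬝ᵥ R *ᵥ v t) := by
  have hRinv : R * R⁻¹ = 1 := Matrix.mul_nonsing_inv R (isUnit_iff_ne_zero.2 hR.det_pos.ne')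
  set s : ℝ → Fin r → ℝ := fun t => R⁻¹ *ᵥ (Bᵀ *ᵥ (P t *ᵥ x t)) with hs
  set w : ℝ → Fin r → ℝ := fun t => v t + s t with hw
  have hxc : Continuous x := continuous_of_hasDerivAt hx
  have hPc : Continuous P := continuous_of_hasDerivAt hP
  have hsc : Continuous s := continuous_mulVec continuous_const
    (continuous_mulVec continuous_const (continuous_mulVec hPc hxc))
  have hwc : Continuous w := hv.add hsc
  have hec : Continuous fun t => Real.exp (-ρ*t) := by continuity
  -- R *ᵥ s t = Bᵀ *ᵥ (P t *ᵥ x t)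
  have hRs' : ∀ t, R *ᵥ s t = Bᵀ *ᵥ (P t *ᵥ x t) := by
    intro t
    rw [hs]
    simp only [mulVec_mulVec, ← Matrix.mul_assoc, hRinv, Matrix.one_mul]
  -- the derivative of f
  set f : ℝ → ℝ := fun t => Real.exp (-ρ*t) * (x t ⬝ᵥ P t *ᵥ x t) with hf
  have hfd : ∀ t, HasDerivAt f
      (Real.exp (-ρ*t) * (w t ⬝ᵥ R *ᵥ w t
        - (x t ⬝ᵥ Q0 *ᵥ x t + v t ⬝ᵥ R *ᵥ v t))) t := by
    intro t
    have hexp : HasDerivAt (fun u => Real.exp (-ρ*u)) (-ρ * Real.exp (-ρ*t)) t := by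
      have := (((hasDerivAt_id t).const_mul (-ρ)).exp)
      simpa [mul_comm] using this
    have hq := hasDerivAt_quad (hx t) (hP t)
    have hmul := hexp.mul hq
    refine HasDerivAt.congr_deriv hmul ?_
    set a := x t
    set b := v t
    set Pt := P t
    -- scalar identities
    have e1 : (A0 *ᵥ a + B *ᵥ b) ⬝ᵥ Pt *ᵥ a
        = a ⬝ᵥ (A0ᵀ * Pt) *ᵥ a + b ⬝ᵥ Bᵀ *ᵥ (Pt *ᵥ a) := by
      rw [add_dotProduct, dot_trans A0 a (Pt *ᵥ a), dot_trans B b (Pt *ᵥ a), mulVec_mulVec]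
    have e2 : a ⬝ᵥ Pt *ᵥ (A0 *ᵥ a + B *ᵥ b)
        = a ⬝ᵥ (Pt * A0) *ᵥ a + b ⬝ᵥ Bᵀ *ᵥ (Pt *ᵥ a) := by
      rw [mulVec_add, dotProduct_add, mulVec_mulVec]
      congr 1
      rw [dot_symm (hPs t) a (B *ᵥ b), dot_trans B b (Pt *ᵥ a)]
    have e3 : a ⬝ᵥ (Pt * B * R⁻¹ * Bᵀ * Pt) *ᵥ a = s t ⬝ᵥ R *ᵥ s t := by
      rw [hRs']
      have : (Pt * B * R⁻¹ * Bᵀ * Pt) *ᵥ a = Pt *ᵥ (B *ᵥ s t) := by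
        rw [hs]; simp only [← mulVec_mulVec, Matrix.mul_assoc]; rfl
      rw [this, dot_symm (hPs t) a (B *ᵥ s t), dot_trans B (s t) (Pt *ᵥ a)]
    have e4 : w t ⬝ᵥ R *ᵥ w t
        = b ⬝ᵥ R *ᵥ b + 2 * (b ⬝ᵥ Bᵀ *ᵥ (Pt *ᵥ a)) + s t ⬝ᵥ R *ᵥ s t := by
      rw [hw]
      simp only [add_dotProduct, dotProduct_add, mulVec_add]
      rw [dot_symm hRs (s t) b]
      rw [hRs' t]
      ring
    have e5 : a ⬝ᵥ P' t *ᵥ a = ρ * (a ⬝ᵥ Pt *ᵥ a) - a ⬝ᵥ (A0ᵀ * Pt) *ᵥ a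
        - a ⬝ᵥ (Pt * A0) *ᵥ a - a ⬝ᵥ Q0 *ᵥ a + s t ⬝ᵥ R *ᵥ s t := by
      have h := hric t
      have h2 : a ⬝ᵥ (ρ • Pt) *ᵥ a
          = a ⬝ᵥ (P' t + A0ᵀ * Pt + Pt * A0 + Q0 - Pt * B * R⁻¹ * Bᵀ * Pt) *ᵥ a := by
        rw [h]
      rw [Matrix.smul_mulVec, dotProduct_smul, smul_eq_mul] at h2
      simp only [add_mulVec, sub_mulVec, dotProduct_add, dotProduct_sub] at h2
      rw [e3] at h2
      linarith
    rw [e4]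
    rw [e1, e2, e5]
    ring
  -- FTC
  have hInt : IntervalIntegrable (fun t => Real.exp (-ρ*t) * (w t ⬝ᵥ R *ᵥ w t
        - (x t ⬝ᵥ Q0 *ᵥ x t + v t ⬝ᵥ R *ᵥ v t))) volume 0 T :=
    (hec.mul ((continuous_dot hwc (continuous_mulVec continuous_const hwc)).sub
      ((continuous_dot hxc (continuous_mulVec continuous_const hxc)).add
        (continuous_dot hv (continuous_mulVec continuous_const hv))))).intervalIntegrable 0 T
  have hFTC : ∫ t in (0:ℝ)..T, Real.exp (-ρ*t) * (w t ⬝ᵥ R *ᵥ w t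
      - (x t ⬝ᵥ Q0 *ᵥ x t + v t ⬝ᵥ R *ᵥ v t)) = 0 := by
    rw [intervalIntegral.integral_eq_sub_of_hasDerivAt (fun t _ => hfd t) hInt]
    simp [hf, hPT, hx0]
  have hsplit : (fun t => Real.exp (-ρ*t) * (x t ⬝ᵥ Q0 *ᵥ x t + v t ⬝ᵥ R *ᵥ v t))
      = fun t => Real.exp (-ρ*t) * (w t ⬝ᵥ R *ᵥ w t)
        - Real.exp (-ρ*t) * (w t ⬝ᵥ R *ᵥ w t
          - (x t ⬝ᵥ Q0 *ᵥ x t + v t ⬝ᵥ R *ᵥ v t)) := by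
    funext t; ring
  rw [hsplit, intervalIntegral.integral_sub
    ((hec.fun_mul (continuous_dot hwc (continuous_mulVec continuous_const hwc))).intervalIntegrable 0 T)
    hInt, hFTC, sub_zero]
  apply intervalIntegral.integral_nonneg hT
  intro t _
  have := hR.posSemidef.dotProduct_mulVec_nonneg (w t)
  simp only [star_trivial] at this
  exact mul_nonneg (Real.exp_pos _).le this

lemma sum_dot {ι : Type*} {m : ℕ} (s : Finset ι) (v : ι → Fin m → ℝ) (w : Fin m → ℝ) :
    (∑ i ∈ s, v i) ⬝ᵥ w = ∑ i ∈ s, v i ⬝ᵥ w := by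
  simp only [dotProduct, Finset.sum_apply, Finset.sum_mul]
  exact Finset.sum_comm

lemma dot_sum {ι : Type*} {m : ℕ} (s : Finset ι) (w : Fin m → ℝ) (v : ι → Fin m → ℝ) :
    w ⬝ᵥ (∑ i ∈ s, v i) = ∑ i ∈ s, w ⬝ᵥ v i := by
  simp only [dotProduct, Finset.sum_apply, Finset.mul_sum]
  exact Finset.sum_comm

lemma sum_split {n N : ℕ} (hN : (N:ℝ) ≠ 0) (Q : Matrix (Fin n) (Fin n) ℝ)
    (z : Fin N → Fin n → ℝ) (zb : Fin n → ℝ) (hzb : zb = (N:ℝ)⁻¹ • ∑ j, z j) :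
    ∑ i, z i ⬝ᵥ Q *ᵥ z i
      = (∑ i, (z i - zb) ⬝ᵥ Q *ᵥ (z i - zb)) + N * (zb ⬝ᵥ Q *ᵥ zb) := by
  have hsum : ∑ j, z j = (N:ℝ) • zb := by
    rw [hzb, smul_smul, mul_inv_cancel₀ hN, one_smul]
  have expand : ∀ i, (z i - zb) ⬝ᵥ Q *ᵥ (z i - zb)
      = z i ⬝ᵥ Q *ᵥ z i - z i ⬝ᵥ Q *ᵥ zb - zb ⬝ᵥ Q *ᵥ z i + zb ⬝ᵥ Q *ᵥ zb := by
    intro i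
    simp only [sub_dotProduct, mulVec_sub, dotProduct_sub]
    ring
  simp only [expand, Finset.sum_add_distrib, Finset.sum_sub_distrib, Finset.sum_const,
    Finset.card_univ, Fintype.card_fin]
  have h1 : ∑ i, z i ⬝ᵥ Q *ᵥ zb = N * (zb ⬝ᵥ Q *ᵥ zb) := by
    rw [← sum_dot, hsum, smul_dotProduct, smul_eq_mul]
  have h2 : ∑ i, zb ⬝ᵥ Q *ᵥ z i = N * (zb ⬝ᵥ Q *ᵥ zb) := by
    have : ∑ i, Q *ᵥ z i = Q *ᵥ ∑ i, z i := by
      simp only [← Matrix.mulVecLin_apply]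
      exact (map_sum Q.mulVecLin z Finset.univ).symm
    rw [← dot_sum, this, hsum, mulVec_smul, dotProduct_smul, smul_eq_mul]
  rw [h1, h2, nsmul_eq_mul]
  ring

lemma mulVec_sum' {ι : Type*} {n m : ℕ} (s : Finset ι) (M : Matrix (Fin n) (Fin m) ℝ)
    (v : ι → Fin m → ℝ) : ∑ i ∈ s, M *ᵥ v i = M *ᵥ ∑ i ∈ s, v i := by
  simp only [← Matrix.mulVecLin_apply]
  exact (map_sum M.mulVecLin v s).symm

theorem social_cost_convexity
    (n r N : ℕ) (ρ T : ℝ) (hT : 0 < T)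
    (A G Γ Q : Matrix (Fin n) (Fin n) ℝ) (hQ : Q.IsSymm)
    (B : Matrix (Fin n) (Fin r) ℝ) (R : Matrix (Fin r) (Fin r) ℝ)
    (hR : R.PosDef) (hRs : R.IsSymm)
    (P Pi : ℝ → Matrix (Fin n) (Fin n) ℝ)
    (P' Pi' : ℝ → Matrix (Fin n) (Fin n) ℝ)
    (hPderiv : ∀ t, HasDerivAt P (P' t) t)
    (hPiDeriv : ∀ t, HasDerivAt Pi (Pi' t) t)
    (hPsymm : ∀ t, (P t).IsSymm) (hPiSymm : ∀ t, (Pi t).IsSymm)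
    (hPric : ∀ t, ρ • P t = P' t + Aᵀ * P t + P t * A + Q - P t * B * R⁻¹ * Bᵀ * P t)
    (hPT : P T = 0)
    (hPiric : ∀ t, ρ • Pi t = Pi' t + (A + G)ᵀ * Pi t + Pi t * (A + G)
        + (1 - Γ)ᵀ * Q * (1 - Γ) - Pi t * B * R⁻¹ * Bᵀ * Pi t)
    (hPiT : Pi T = 0)
    (u : Fin N → ℝ → (Fin r → ℝ)) (hu : ∀ i, Continuous (u i))
    (y : Fin N → ℝ → (Fin n → ℝ))
    (yN : ℝ → (Fin n → ℝ)) (hyN : ∀ t, yN t = (N : ℝ)⁻¹ • ∑ j, y j t)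
    (hyode : ∀ i t, HasDerivAt (y i)
        (A.mulVec (y i t) + G.mulVec (yN t) + B.mulVec (u i t)) t)
    (hy0 : ∀ i, y i 0 = 0) :
    0 ≤ ∑ i, ∫ t in (0:ℝ)..T, Real.exp (-ρ * t) *
        ((y i t - Γ.mulVec (yN t)) ⬝ᵥ Q.mulVec (y i t - Γ.mulVec (yN t))
          + (u i t) ⬝ᵥ R.mulVec (u i t)) := by
  rcases eq_or_ne N 0 with hN0 | hN0
  · subst hN0; simp
  have hN : (N:ℝ) ≠ 0 := Nat.cast_ne_zero.2 hN0
  set ub : ℝ → Fin r → ℝ := fun t => (N:ℝ)⁻¹ • ∑ j, u j t with hubdef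
  have hyc : ∀ i, Continuous (y i) := fun i => continuous_of_hasDerivAt (hyode i)
  have hyNc : Continuous yN := by
    have h : yN = fun t => (N:ℝ)⁻¹ • ∑ j, y j t := funext hyN
    rw [h]; exact (continuous_finset_sum _ fun j _ => hyc j).fun_const_smul ((N:ℝ)⁻¹)
  have hubc : Continuous ub := (continuous_finset_sum _ fun j _ => hu j).fun_const_smul ((N:ℝ)⁻¹)
  have hec : Continuous fun t : ℝ => Real.exp (-ρ * t) :=
    Real.continuous_exp.comp (continuous_const.mul continuous_id)
  have hyN0 : yN 0 = 0 := by rw [hyN 0]; simp [hy0]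
  -- derivative of yN
  have hyNd : ∀ t, HasDerivAt yN ((A + G) *ᵥ yN t + B *ᵥ ub t) t := by
    intro t
    have h0 : HasDerivAt (fun s => (N:ℝ)⁻¹ • ∑ j, y j s)
        ((N:ℝ)⁻¹ • ∑ j, (A *ᵥ y j t + G *ᵥ yN t + B *ᵥ u j t)) t :=
      (HasDerivAt.fun_sum fun j _ => hyode j t).const_smul ((N:ℝ)⁻¹)
    have heq : (fun s => (N:ℝ)⁻¹ • ∑ j, y j s) = yN := (funext hyN).symm
    rw [heq] at h0
    convert h0 using 1
    have c1 : (N:ℝ)⁻¹ • ∑ j, A *ᵥ y j t = A *ᵥ yN t := by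
      rw [mulVec_sum', ← Matrix.mulVec_smul, ← hyN t]
    have c2 : (N:ℝ)⁻¹ • ∑ _j : Fin N, G *ᵥ yN t = G *ᵥ yN t := by
      rw [Finset.sum_const, Finset.card_univ, Fintype.card_fin,
        ← Nat.cast_smul_eq_nsmul ℝ, smul_smul, inv_mul_cancel₀ hN, one_smul]
    have c3 : (N:ℝ)⁻¹ • ∑ j, B *ᵥ u j t = B *ᵥ ub t := by
      rw [mulVec_sum', ← Matrix.mulVec_smul, hubdef]
    rw [Finset.sum_add_distrib, Finset.sum_add_distrib, smul_add, smul_add,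
      c1, c2, c3, add_mulVec]
  -- deviations
  have hxode : ∀ i t, HasDerivAt (fun s => y i s - yN s)
      (A *ᵥ (y i t - yN t) + B *ᵥ (u i t - ub t)) t := by
    intro i t
    have h := (hyode i t).sub (hyNd t)
    refine HasDerivAt.congr_deriv h ?_
    simp only [mulVec_sub, add_mulVec]
    abel
  have hvc : ∀ i, Continuous fun s => u i s - ub s := fun i => (hu i).sub hubc
  have key1 : ∀ i, 0 ≤ ∫ t in (0:ℝ)..T, Real.exp (-ρ*t) *
      ((y i t - yN t) ⬝ᵥ Q *ᵥ (y i t - yN t) + (u i t - ub t) ⬝ᵥ R *ᵥ (u i t - ub t)) :=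
    fun i => key_nonneg n r ρ T hT.le A Q B R hR hRs P P' hPderiv hPsymm hPric hPT
      _ _ (hvc i) (hxode i) (by simp [hy0, hyN0])
  have key2 : 0 ≤ ∫ t in (0:ℝ)..T, Real.exp (-ρ*t) *
      (yN t ⬝ᵥ ((1-Γ)ᵀ * Q * (1-Γ)) *ᵥ yN t + ub t ⬝ᵥ R *ᵥ ub t) :=
    key_nonneg n r ρ T hT.le (A+G) _ B R hR hRs Pi Pi' hPiDeriv hPiSymm hPiric hPiT
      yN ub hubc hyNd hyN0
  -- pointwise decomposition
  have hpt : ∀ t, ∑ i, Real.exp (-ρ * t) *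
      ((y i t - Γ *ᵥ yN t) ⬝ᵥ Q *ᵥ (y i t - Γ *ᵥ yN t) + u i t ⬝ᵥ R *ᵥ u i t)
      = (∑ i, Real.exp (-ρ*t) *
          ((y i t - yN t) ⬝ᵥ Q *ᵥ (y i t - yN t) + (u i t - ub t) ⬝ᵥ R *ᵥ (u i t - ub t)))
        + (N:ℝ) * (Real.exp (-ρ*t) *
          (yN t ⬝ᵥ ((1-Γ)ᵀ * Q * (1-Γ)) *ᵥ yN t + ub t ⬝ᵥ R *ᵥ ub t)) := by
    intro t
    have hzb : (1 - Γ) *ᵥ yN t = (N:ℝ)⁻¹ • ∑ j, (y j t - Γ *ᵥ yN t) := by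
      rw [Finset.sum_sub_distrib, Finset.sum_const, Finset.card_univ, Fintype.card_fin,
        smul_sub, ← hyN t, ← Nat.cast_smul_eq_nsmul ℝ, smul_smul, inv_mul_cancel₀ hN,
        one_smul, sub_mulVec, one_mulVec]
    have h1 := sum_split hN Q (fun j => y j t - Γ *ᵥ yN t) ((1-Γ) *ᵥ yN t) hzb
    have h2 := sum_split hN R (fun j => u j t) (ub t) rfl
    have hx' : ∀ i : Fin N, (y i t - Γ *ᵥ yN t) - (1 - Γ) *ᵥ yN t = y i t - yN t := by
      intro i; rw [sub_mulVec, one_mulVec]; abel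
    simp only [hx'] at h1
    have hq2 : ((1-Γ) *ᵥ yN t) ⬝ᵥ Q *ᵥ ((1-Γ) *ᵥ yN t)
        = yN t ⬝ᵥ ((1-Γ)ᵀ * Q * (1-Γ)) *ᵥ yN t := by
      rw [dot_trans, mulVec_mulVec, mulVec_mulVec]
    rw [hq2] at h1
    simp only [mul_add, Finset.sum_add_distrib, ← Finset.mul_sum]
    rw [h1, h2]
    ring
  -- continuity of integrands
  have hGy : Continuous fun t => Γ *ᵥ yN t := continuous_mulVec continuous_const hyNc
  have hzc : ∀ i, Continuous fun t => y i t - Γ *ᵥ yN t := fun i => (hyc i).sub hGy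
  have hFc : ∀ i : Fin N, Continuous fun t => Real.exp (-ρ * t) *
      ((y i t - Γ *ᵥ yN t) ⬝ᵥ Q *ᵥ (y i t - Γ *ᵥ yN t) + u i t ⬝ᵥ R *ᵥ u i t) :=
    fun i => hec.mul ((continuous_dot (hzc i)
      (continuous_mulVec continuous_const (hzc i))).add
      (continuous_dot (hu i) (continuous_mulVec continuous_const (hu i))))
  have hxc : ∀ i, Continuous fun t => y i t - yN t := fun i => (hyc i).sub hyNc
  have hGc : ∀ i : Fin N, Continuous fun t => Real.exp (-ρ*t) *
      ((y i t - yN t) ⬝ᵥ Q *ᵥ (y i t - yN t) + (u i t - ub t) ⬝ᵥ R *ᵥ (u i t - ub t)) :=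
    fun i => hec.mul ((continuous_dot (hxc i)
      (continuous_mulVec continuous_const (hxc i))).add
      (continuous_dot (hvc i) (continuous_mulVec continuous_const (hvc i))))
  have hHc : Continuous fun t => Real.exp (-ρ*t) *
      (yN t ⬝ᵥ ((1-Γ)ᵀ * Q * (1-Γ)) *ᵥ yN t + ub t ⬝ᵥ R *ᵥ ub t) :=
    hec.mul ((continuous_dot hyNc (continuous_mulVec continuous_const hyNc)).add
      (continuous_dot hubc (continuous_mulVec continuous_const hubc)))
  rw [← intervalIntegral.integral_finset_sum (fun i _ => (hFc i).intervalIntegrable 0 T)]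
  have hcongr : (fun t => ∑ i, Real.exp (-ρ * t) *
      ((y i t - Γ *ᵥ yN t) ⬝ᵥ Q *ᵥ (y i t - Γ *ᵥ yN t) + u i t ⬝ᵥ R *ᵥ u i t))
      = fun t => (∑ i, Real.exp (-ρ*t) *
          ((y i t - yN t) ⬝ᵥ Q *ᵥ (y i t - yN t) + (u i t - ub t) ⬝ᵥ R *ᵥ (u i t - ub t)))
        + (N:ℝ) * (Real.exp (-ρ*t) *
          (yN t ⬝ᵥ ((1-Γ)ᵀ * Q * (1-Γ)) *ᵥ yN t + ub t ⬝ᵥ R *ᵥ ub t)) := funext hpt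
  rw [hcongr, intervalIntegral.integral_add
    ((continuous_finset_sum _ fun i _ => hGc i).intervalIntegrable 0 T)
    ((continuous_const.fun_mul hHc).intervalIntegrable 0 T),
    intervalIntegral.integral_finset_sum (fun i _ => (hGc i).intervalIntegrable 0 T),
    intervalIntegral.integral_const_mul]
  exact add_nonneg (Finset.sum_nonneg fun i _ => key1 i)
    (mul_nonneg (Nat.cast_nonneg N) key2)
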